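/- For every integer i ≥ 0, C(γA)^i + D(γB)^i ≥ (1 + ηβ)^i, with equality for i = 0 and i = 1. -/

import Mathlib

/-- For every integer `i ≥ 0`, `C(γA)^i + D(γB)^i ≥ (1 + ηβ)^i`, with
equality for `i = 0` and `i = 1`. -/
theorem jensen_root_power_bound
    (η β γ A B C D : ℝ)
    (hη : 0 < η) (hβ : 0 < β) (hγ0 : 0 < γ) (hγ1 : γ < 1)
    (hA : γ * A ^ 2 - (1 + γ + η * β) * A + 1 = 0)
    (hB : γ * B ^ 2 - (1 + γ + η * β) * B + 1 = 0)
    (hBA : B < A)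
    (hC : C = (A - 1) / (A - B))
    (hD : D = (1 - B) / (A - B)) :
    (∀ i : ℕ, (1 + η * β) ^ i ≤ C * (γ * A) ^ i + D * (γ * B) ^ i) ∧
    C * (γ * A) ^ (0 : ℕ) + D * (γ * B) ^ (0 : ℕ) = (1 + η * β) ^ (0 : ℕ) ∧
    C * (γ * A) ^ (1 : ℕ) + D * (γ * B) ^ (1 : ℕ) = (1 + η * β) ^ (1 : ℕ) := by
  have hABne : A - B > 0 := by linarith
  have hsum : γ * (A + B) = 1 + γ + η * β := by
    have h := sub_eq_zero.mpr (hA.trans hB.symm)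
    have : (A - B) * (γ * (A + B) - (1 + γ + η * β)) = 0 := by ring_nf; nlinarith [h]
    have := mul_eq_zero.mp this
    rcases this with h1 | h2
    · linarith
    · linarith
  have hprod : γ * (A * B) = 1 := by nlinarith [hA, hsum]
  -- B < 1 < A
  have hfac : γ * ((1 - A) * (1 - B)) = -(η * β) := by nlinarith [hsum, hprod]
  have hABpos : 0 < A * B := by
    have : A * B = 1 / γ := by field_simp at hprod ⊢; linarith
    rw [this]; positivity
  have hABsum : 0 < A + B := by nlinarith [hsum]
  have hBpos : 0 < B := by nlinarith
  have hApos : 0 < A := by linarith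
  have h1A : 1 < A := by nlinarith [hfac]
  have hX : (1 - A) * (1 - B) < 0 := by nlinarith [hfac]
  have hB1 : B < 1 := by nlinarith [hX]
  have hCpos : 0 < C := by rw [hC]; exact div_pos (by linarith) hABne
  have hDpos : 0 < D := by rw [hD]; exact div_pos (by linarith) hABne
  have hCD : C + D = 1 := by rw [hC, hD]; field_simp; ring
  set a := γ * A with ha
  set b := γ * B with hb
  have hapos : 0 < a := by positivity
  have hbpos : 0 < b := by positivity
  have hba : b ≤ a := by
    have := mul_le_mul_of_nonneg_left hBA.le hγ0.le; simpa [ha, hb] using this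
  have hCADB : C * A + D * B = A + B - 1 := by
    rw [hC, hD]; field_simp; ring
  have hmean : C * a + D * b = 1 + η * β := by
    have h : C * a + D * b = γ * (C * A + D * B) := by rw [ha, hb]; ring
    rw [h, hCADB]; linear_combination hsum
  have hspos : 0 < 1 + η * β := by positivity
  have main : ∀ i : ℕ, (1 + η * β) ^ i ≤ C * a ^ i + D * b ^ i := by
    intro i
    induction i with
    | zero => simp [hCD]
    | succ n ih =>
      have hpow : b ^ n ≤ a ^ n := pow_le_pow_left₀ hbpos.le hba n
      have key : (C * a ^ n + D * b ^ n) * (C * a + D * b) ≤ C * a ^ (n+1) + D * b ^ (n+1) := by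
        have h1 : 0 ≤ C * D * ((a - b) * (a ^ n - b ^ n)) := by
          apply mul_nonneg (by positivity)
          apply mul_nonneg (by linarith) (by linarith)
        have expand : C * a ^ (n+1) + D * b ^ (n+1) - (C * a ^ n + D * b ^ n) * (C * a + D * b)
            = C * D * ((a - b) * (a ^ n - b ^ n)) := by
          have : D = 1 - C := by linarith
          rw [this]; ring
        linarith
      calc (1 + η * β) ^ (n+1) = (1 + η * β) ^ n * (1 + η * β) := by ring
        _ ≤ (C * a ^ n + D * b ^ n) * (1 + η * β) := by
            apply mul_le_mul_of_nonneg_right ih hspos.le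
        _ = (C * a ^ n + D * b ^ n) * (C * a + D * b) := by rw [hmean]
        _ ≤ _ := key
  refine ⟨main, by simp [hCD], by simpa using hmean⟩
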